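/- Let c > 0 be a constant and define u(x,y,z) = ln( (x² + y² + √((x²+y²)² + 4c z²)) / c ) on the region where x²+y² > 0 and z ≠ 0. Then u satisfies u_{xx} + u_{yy} + (e^u)_{zz} − (e^u / z) u_z = 0. -/

import Mathlib

open Real

lemma sqrt_lem (a K : ℝ) (ha : 0 ≤ a) (hK : 0 < K) (s : ℝ) :
    HasDerivAt (fun s => Real.sqrt ((s^2+a)^2 + K))
      (2*s*(s^2+a) / Real.sqrt ((s^2+a)^2+K)) s := by
  have hr : HasDerivAt (fun s : ℝ => s^2+a) (2*s) s := by
    simpa using ((hasDerivAt_pow 2 s).add_const a)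
  have h1 : HasDerivAt (fun s : ℝ => (s^2+a)^2 + K) (2*(s^2+a)^1*(2*s)) s := by
    simpa using (hr.pow 2).add_const K
  have hpos : 0 < (s^2+a)^2 + K := by positivity
  have hS0 : Real.sqrt ((s^2+a)^2 + K) ≠ 0 := by positivity
  have := h1.sqrt hpos.ne'
  convert this using 1
  field_simp

lemma duX (a c K : ℝ) (ha : 0 ≤ a) (hc : 0 < c) (hK : 0 < K) (s : ℝ) :
    HasDerivAt (fun s => Real.log ((s^2 + a + Real.sqrt ((s^2+a)^2 + K))/c))
      (2*s / Real.sqrt ((s^2+a)^2 + K)) s := by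
  have hr : HasDerivAt (fun s : ℝ => s^2+a) (2*s) s := by
    simpa using ((hasDerivAt_pow 2 s).add_const a)
  have hS := sqrt_lem a K ha hK s
  have hSpos : 0 < Real.sqrt ((s^2+a)^2 + K) := by positivity
  have hQpos : 0 < (s^2 + a + Real.sqrt ((s^2+a)^2 + K))/c := by
    apply div_pos _ hc
    nlinarith [sq_nonneg s]
  have hQ := (hr.add hS).div_const c
  have := hQ.log hQpos.ne'
  convert this using 1
  · rfl
  simp only [Pi.add_apply]
  have ha2 : s^2 + a + Real.sqrt ((s^2+a)^2 + K) ≠ 0 := by nlinarith [sq_nonneg s]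
  field_simp
  ring

lemma duXX (a K : ℝ) (ha : 0 ≤ a) (hK : 0 < K) (s : ℝ) :
    HasDerivAt (fun s => 2*s / Real.sqrt ((s^2+a)^2 + K))
      (2 / Real.sqrt ((s^2+a)^2+K) - 4*s^2*(s^2+a) / (Real.sqrt ((s^2+a)^2+K))^3) s := by
  have hS := sqrt_lem a K ha hK s
  have hSpos : 0 < Real.sqrt ((s^2+a)^2 + K) := by positivity
  have h2 : HasDerivAt (fun s : ℝ => 2*s) 2 s := by
    simpa using (hasDerivAt_id s).const_mul 2
  have := h2.div hS hSpos.ne'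
  convert this using 1
  · rfl
  · rfl
  · rfl
  set T := Real.sqrt ((s^2+a)^2 + K) with hT
  field_simp
  ring

lemma dQZ (r c : ℝ) (hr : 0 < r) (hc : 0 < c) (s : ℝ) :
    HasDerivAt (fun s => (r + Real.sqrt (r^2 + 4*c*s^2))/c)
      (4*s / Real.sqrt (r^2 + 4*c*s^2)) s := by
  have h1 : HasDerivAt (fun s : ℝ => r^2 + 4*c*s^2) (4*c*(2*s)) s := by
    simpa using (((hasDerivAt_pow 2 s).const_mul (4*c)).const_add (r^2))
  have hpos : 0 < r^2 + 4*c*s^2 := by positivity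
  have hS0 : Real.sqrt (r^2 + 4*c*s^2) ≠ 0 := by positivity
  have := ((h1.sqrt hpos.ne').const_add r).div_const c
  convert this using 1
  · rfl
  · rfl
  field_simp

lemma dQZZ (r c : ℝ) (hr : 0 < r) (hc : 0 < c) (s : ℝ) :
    HasDerivAt (fun s => 4*s / Real.sqrt (r^2 + 4*c*s^2))
      (4 / Real.sqrt (r^2+4*c*s^2) - 16*c*s^2 / (Real.sqrt (r^2+4*c*s^2))^3) s := by
  have h1 : HasDerivAt (fun s : ℝ => r^2 + 4*c*s^2) (4*c*(2*s)) s := by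
    simpa using (((hasDerivAt_pow 2 s).const_mul (4*c)).const_add (r^2))
  have hpos : 0 < r^2 + 4*c*s^2 := by positivity
  have hSpos : 0 < Real.sqrt (r^2 + 4*c*s^2) := by positivity
  have hS := h1.sqrt hpos.ne'
  have h4 : HasDerivAt (fun s : ℝ => 4*s) 4 s := by
    simpa using (hasDerivAt_id s).const_mul 4
  have := h4.div hS hSpos.ne'
  convert this using 1
  · rfl
  · rfl
  · rfl
  set T := Real.sqrt (r^2 + 4*c*s^2) with hT
  field_simp
  ring

lemma duZ (r c : ℝ) (hr : 0 < r) (hc : 0 < c) (s : ℝ) :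
    HasDerivAt (fun s => Real.log ((r + Real.sqrt (r^2 + 4*c*s^2))/c))
      (4*c*s / (Real.sqrt (r^2+4*c*s^2) * (r + Real.sqrt (r^2+4*c*s^2)))) s := by
  have h1 : HasDerivAt (fun s : ℝ => r^2 + 4*c*s^2) (4*c*(2*s)) s := by
    simpa using (((hasDerivAt_pow 2 s).const_mul (4*c)).const_add (r^2))
  have hpos : 0 < r^2 + 4*c*s^2 := by positivity
  have hSpos : 0 < Real.sqrt (r^2 + 4*c*s^2) := by positivity
  have hQpos : 0 < (r + Real.sqrt (r^2 + 4*c*s^2))/c := by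
    apply div_pos _ hc; linarith
  have := (((h1.sqrt hpos.ne').const_add r).div_const c).log hQpos.ne'
  convert this using 1
  have hQ0 : r + Real.sqrt (r^2 + 4*c*s^2) ≠ 0 := by linarith
  field_simp

/-- The explicit function `u = ln((x²+y²+√((x²+y²)²+4cz²))/c)` solves
`u_{xx} + u_{yy} + (eᵘ)_{zz} − (eᵘ/z) u_z = 0` where `x²+y² > 0` and `z ≠ 0`. -/
theorem stmt7 (c : ℝ) (hc : 0 < c)
    (u : ℝ → ℝ → ℝ → ℝ)
    (hu : ∀ x y z, u x y z =
      Real.log ((x^2 + y^2 + Real.sqrt ((x^2 + y^2)^2 + 4*c*z^2)) / c)) :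
    ∀ x y z : ℝ, 0 < x^2 + y^2 → z ≠ 0 →
      deriv (deriv (fun s => u s y z)) x
      + deriv (deriv (fun s => u x s z)) y
      + deriv (deriv (fun s => Real.exp (u x y s))) z
      - (Real.exp (u x y z) / z) * deriv (fun s => u x y s) z = 0 := by
  intro x y z hxy hz
  have hK : 0 < 4*c*z^2 := by positivity
  -- x direction
  have e1 : (fun s => u s y z)
      = fun s => Real.log ((s^2 + y^2 + Real.sqrt ((s^2+y^2)^2 + 4*c*z^2))/c) := by
    funext s; exact hu s y z
  have d1 : deriv (fun s => u s y z)
      = fun s => 2*s / Real.sqrt ((s^2+y^2)^2 + 4*c*z^2) := by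
    rw [e1]; funext s
    exact (duX (y^2) c (4*c*z^2) (sq_nonneg y) hc hK s).deriv
  have dxx : deriv (deriv (fun s => u s y z)) x
      = 2 / Real.sqrt ((x^2+y^2)^2+4*c*z^2)
        - 4*x^2*(x^2+y^2) / (Real.sqrt ((x^2+y^2)^2+4*c*z^2))^3 := by
    rw [d1]; exact (duXX (y^2) (4*c*z^2) (sq_nonneg y) hK x).deriv
  -- y direction
  have e2 : (fun s => u x s z)
      = fun s => Real.log ((s^2 + x^2 + Real.sqrt ((s^2+x^2)^2 + 4*c*z^2))/c) := by
    funext s; rw [hu x s z, add_comm (x^2) (s^2)]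
  have d2 : deriv (fun s => u x s z)
      = fun s => 2*s / Real.sqrt ((s^2+x^2)^2 + 4*c*z^2) := by
    rw [e2]; funext s
    exact (duX (x^2) c (4*c*z^2) (sq_nonneg x) hc hK s).deriv
  have dyy : deriv (deriv (fun s => u x s z)) y
      = 2 / Real.sqrt ((y^2+x^2)^2+4*c*z^2)
        - 4*y^2*(y^2+x^2) / (Real.sqrt ((y^2+x^2)^2+4*c*z^2))^3 := by
    rw [d2]; exact (duXX (x^2) (4*c*z^2) (sq_nonneg x) hK y).deriv
  -- z direction
  have hQpos : ∀ s : ℝ, 0 < (x^2 + y^2 + Real.sqrt ((x^2+y^2)^2 + 4*c*s^2))/c := by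
    intro s
    apply div_pos _ hc
    have := Real.sqrt_nonneg ((x^2+y^2)^2 + 4*c*s^2)
    linarith
  have e3 : (fun s => Real.exp (u x y s))
      = fun s => (x^2 + y^2 + Real.sqrt ((x^2+y^2)^2 + 4*c*s^2))/c := by
    funext s; rw [hu x y s, Real.exp_log (hQpos s)]
  have d3 : deriv (fun s => Real.exp (u x y s))
      = fun s => 4*s / Real.sqrt ((x^2+y^2)^2 + 4*c*s^2) := by
    rw [e3]; funext s
    exact (dQZ (x^2+y^2) c hxy hc s).deriv
  have dzz : deriv (deriv (fun s => Real.exp (u x y s))) z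
      = 4 / Real.sqrt ((x^2+y^2)^2+4*c*z^2)
        - 16*c*z^2 / (Real.sqrt ((x^2+y^2)^2+4*c*z^2))^3 := by
    rw [d3]; exact (dQZZ (x^2+y^2) c hxy hc z).deriv
  have e4 : (fun s => u x y s)
      = fun s => Real.log ((x^2 + y^2 + Real.sqrt ((x^2+y^2)^2 + 4*c*s^2))/c) := by
    funext s; exact hu x y s
  have dz : deriv (fun s => u x y s) z
      = 4*c*z / (Real.sqrt ((x^2+y^2)^2+4*c*z^2) * (x^2+y^2 + Real.sqrt ((x^2+y^2)^2+4*c*z^2))) := by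
    rw [e4]; exact (duZ (x^2+y^2) c hxy hc z).deriv
  have heu : Real.exp (u x y z)
      = (x^2 + y^2 + Real.sqrt ((x^2+y^2)^2 + 4*c*z^2))/c := by
    rw [hu x y z, Real.exp_log (hQpos z)]
  rw [dxx, dyy, dzz, dz, heu]
  set S := Real.sqrt ((x^2+y^2)^2+4*c*z^2) with hSdef
  have hS2 : S^2 = (x^2+y^2)^2+4*c*z^2 := Real.sq_sqrt (by positivity)
  have hSpos : 0 < S := Real.sqrt_pos.mpr (by positivity)
  have hswap : Real.sqrt ((y^2+x^2)^2+4*c*z^2) = S := by rw [hSdef]; ring_nf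
  rw [hswap]
  have hQ0 : x^2+y^2 + S ≠ 0 := by linarith
  field_simp
  linear_combination 4 * hS2
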